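/- Assume as given: (i) a lower bound on the partition function, ln Z_n ≥ −L (ln n) n^{a(d−1)/d} for all large n and some constant L > 0; (ii) subcritical exponential decay, P_{p_c − ε}(|C_max(Λ(n))| ≥ (−ln(p_c − ε)) n^a) ≤ e^{−L' n^a} for all large n and some L' > 0, where 0 < ε < p_c. Then for the measure μ_n(ω) = P_{p_n(ω)}(ω)/Z_n with p_n(ω) = exp(−|C_max(ω)|/n^a), one has limsup_{n→∞} (1/n^a) ln μ_n(p_n ≤ p_c − ε) < 0. -/

import Mathlib

open Filter

/-- The box `Λ(n) = [-n/2, n/2)^d ∩ ℤ^d`. -/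
noncomputable def box (d n : ℕ) : Finset (Fin d → ℤ) :=
  Fintype.piFinset fun _ => Finset.Icc (-(n : ℤ) / 2) (((n : ℤ) - 1) / 2)

/-- The set `E_n` of nearest-neighbour edges with both endpoints in `Λ(n)`. -/
noncomputable def boxEdges (d n : ℕ) : Finset (Sym2 (Fin d → ℤ)) :=
  (((box d n) ×ˢ (box d n)).filter fun p => (∑ i, |p.1 i - p.2 i|) = 1).image (fun p => Sym2.mk p.1 p.2)

/-- Percolation configurations on the edges of the box. -/
abbrev Cfg (d n : ℕ) := {e // e ∈ boxEdges d n} → Bool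

/-- The open subgraph determined by a configuration on the edges of the box. -/
def openBoxGraph (d n : ℕ) (ω : Cfg d n) : SimpleGraph (Fin d → ℤ) :=
  SimpleGraph.fromEdgeSet {e | ∃ h : e ∈ boxEdges d n, ω ⟨e, h⟩ = true}

/-- The open cluster of `x` inside the box. -/
def boxCluster (d n : ℕ) (ω : Cfg d n) (x : Fin d → ℤ) : Set (Fin d → ℤ) :=
  {y | (openBoxGraph d n ω).Reachable x y}

/-- `|C_max(ω)|`, the size of a largest open cluster in the box. -/
noncomputable def cmaxB (d n : ℕ) (ω : Cfg d n) : ℕ :=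
  (box d n).sup fun x => (boxCluster d n ω x).ncard

/-- The automatic control `p_n(ω) = exp(-|C_max(ω)|/n^a)`. -/
noncomputable def pn (d n : ℕ) (a : ℝ) (ω : Cfg d n) : ℝ :=
  Real.exp (-(cmaxB d n ω : ℝ) / (n : ℝ) ^ a)

/-- The Bernoulli(p) weight of a configuration on `E_n`. -/
noncomputable def Pcfg (d n : ℕ) (p : ℝ) (ω : Cfg d n) : ℝ :=
  ∏ e : {e // e ∈ boxEdges d n}, (if ω e then p else 1 - p)

/-- `P_q(S)`: Bernoulli(q) probability of an event `S` in the box. -/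
noncomputable def PrEvent (d n : ℕ) (q : ℝ) (S : Set (Cfg d n)) : ℝ :=
  ∑ ω : Cfg d n, S.indicator (Pcfg d n q) ω

/-- The partition function `Z_n = Σ_ω P_{p_n(ω)}(ω)`. -/
noncomputable def Zn (d n : ℕ) (a : ℝ) : ℝ :=
  ∑ ω : Cfg d n, Pcfg d n (pn d n a ω) ω

/-- The self-critical measure `μ_n(S) = (1/Z_n) Σ_{ω ∈ S} P_{p_n(ω)}(ω)`. -/
noncomputable def muEvent (d n : ℕ) (a : ℝ) (S : Set (Cfg d n)) : ℝ :=
  (∑ ω : Cfg d n, S.indicator (fun ω' => Pcfg d n (pn d n a ω') ω') ω) / Zn d n a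

set_option linter.unusedSectionVars false

namespace MuTail

variable {ι : Type*} [Fintype ι] [DecidableEq ι]

/-- Bernoulli weight of a single bit. -/
def bw (p : ℝ) (b : Bool) : ℝ := if b then p else 1 - p

/-- Product Bernoulli weight with possibly site-dependent parameters. -/
def bernV (r : ι → ℝ) (ω : ι → Bool) : ℝ := ∏ e, bw (r e) (ω e)

/-- Probability of an event under product Bernoulli with site-dependent parameters. -/
noncomputable def GV (r : ι → ℝ) (S : Set (ι → Bool)) : ℝ :=
  ∑ ω : ι → Bool, S.indicator (bernV r) ω

/-- Probability of an event under Bernoulli(p). -/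
noncomputable def PrB (p : ℝ) (S : Set (ι → Bool)) : ℝ := GV (fun _ => p) S

@[simp] lemma bw_true (p : ℝ) : bw p true = p := rfl
@[simp] lemma bw_false (p : ℝ) : bw p false = 1 - p := rfl

lemma bw_nonneg {p : ℝ} (h0 : 0 ≤ p) (h1 : p ≤ 1) (b : Bool) : 0 ≤ bw p b := by
  cases b <;> simp [bw] <;> linarith

lemma bernV_nonneg {r : ι → ℝ} (hr : ∀ e, 0 ≤ r e ∧ r e ≤ 1) (ω : ι → Bool) :
    0 ≤ bernV r ω :=
  Finset.prod_nonneg fun e _ => bw_nonneg (hr e).1 (hr e).2 _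

/-- indicator of membership, as a real number. -/
noncomputable def chi (S : Set (ι → Bool)) (ω : ι → Bool) : ℝ := S.indicator 1 ω

lemma chi_nonneg (S : Set (ι → Bool)) (ω : ι → Bool) : 0 ≤ chi S ω := by
  classical
  rw [chi, Set.indicator_apply]
  split_ifs <;> norm_num

lemma chi_le_one (S : Set (ι → Bool)) (ω : ι → Bool) : chi S ω ≤ 1 := by
  classical
  rw [chi, Set.indicator_apply]
  split_ifs <;> norm_num

lemma chi_of_mem {S : Set (ι → Bool)} {ω : ι → Bool} (h : ω ∈ S) : chi S ω = 1 := by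
  classical
  rw [chi, Set.indicator_apply]; simp [h]

lemma chi_of_not_mem {S : Set (ι → Bool)} {ω : ι → Bool} (h : ω ∉ S) : chi S ω = 0 := by
  classical
  rw [chi, Set.indicator_apply]; simp [h]

lemma chi_mono {S : Set (ι → Bool)} {ω ω' : ι → Bool}
    (hS : ∀ ⦃σ σ' : ι → Bool⦄, σ ≤ σ' → σ ∈ S → σ' ∈ S) (h : ω ≤ ω') :
    chi S ω ≤ chi S ω' := by
  classical
  by_cases hω : ω ∈ S
  · rw [chi_of_mem hω, chi_of_mem (hS h hω)]
  · rw [chi_of_not_mem hω]; exact chi_nonneg _ _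

lemma indicator_eq_chi (S : Set (ι → Bool)) (f : (ι → Bool) → ℝ) (ω : ι → Bool) :
    S.indicator f ω = chi S ω * f ω := by
  classical
  rw [chi, Set.indicator_apply, Set.indicator_apply]
  split_ifs <;> simp

lemma sum_bernV (r : ι → ℝ) : ∑ ω : ι → Bool, bernV r ω = 1 := by
  classical
  have h1 : ∑ ω ∈ Fintype.piFinset (fun _ : ι => (Finset.univ : Finset Bool)),
      ∏ e, bw (r e) (ω e) = ∏ e : ι, ∑ b : Bool, bw (r e) b :=
    (Finset.prod_univ_sum _ _).symm
  rw [show (∑ ω : ι → Bool, bernV r ω) =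
      ∑ ω ∈ Fintype.piFinset (fun _ : ι => (Finset.univ : Finset Bool)),
        ∏ e, bw (r e) (ω e) by rw [Fintype.piFinset_univ]; rfl, h1]
  refine Finset.prod_eq_one fun e _ => ?_
  rw [Fintype.sum_bool]
  simp [bw]

lemma GV_nonneg {r : ι → ℝ} (hr : ∀ e, 0 ≤ r e ∧ r e ≤ 1) (S : Set (ι → Bool)) :
    0 ≤ GV r S :=
  Finset.sum_nonneg fun ω _ =>
    Set.indicator_nonneg (fun ω _ => bernV_nonneg hr ω) ω

lemma GV_mono_set {r : ι → ℝ} (hr : ∀ e, 0 ≤ r e ∧ r e ≤ 1) {S S' : Set (ι → Bool)}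
    (h : S ⊆ S') : GV r S ≤ GV r S' :=
  Finset.sum_le_sum fun ω _ =>
    Set.indicator_le_indicator_of_subset h (fun ω => bernV_nonneg hr ω) ω

lemma GV_le_one {r : ι → ℝ} (hr : ∀ e, 0 ≤ r e ∧ r e ≤ 1) (S : Set (ι → Bool)) :
    GV r S ≤ 1 := by
  have h := GV_mono_set hr (Set.subset_univ S)
  have : GV r (Set.univ : Set (ι → Bool)) = 1 := by
    rw [GV]
    simp only [Set.indicator_univ]
    exact sum_bernV r
  linarith

lemma GV_compl (r : ι → ℝ) (S : Set (ι → Bool)) : GV r Sᶜ = 1 - GV r S := by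
  have h : GV r Sᶜ + GV r S = 1 := by
    calc GV r Sᶜ + GV r S
        = ∑ ω : ι → Bool, (Sᶜ.indicator (bernV r) ω + S.indicator (bernV r) ω) :=
          Finset.sum_add_distrib.symm
      _ = ∑ ω : ι → Bool, bernV r ω := Finset.sum_congr rfl fun ω _ =>
          congrFun (Set.indicator_compl_add_self S (bernV r)) ω
      _ = 1 := sum_bernV r
  linarith


lemma PrB_empty (p : ℝ) : PrB (ι := ι) p (∅ : Set (ι → Bool)) = 0 := by
  simp [PrB, GV]

section Harris

variable (S : Set (ι → Bool))

/-- Insert a value at coordinate `i`. -/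
def cfgAt (i : ι) (b : Bool) (η : {j // j ≠ i} → Bool) : ι → Bool :=
  (Equiv.funSplitAt i Bool).symm (b, η)

lemma cfgAt_apply_self (i : ι) (b : Bool) (η : {j // j ≠ i} → Bool) :
    cfgAt i b η i = b := by
  simp [cfgAt, Equiv.funSplitAt_symm_apply]

lemma cfgAt_apply_ne (i : ι) (b : Bool) (η : {j // j ≠ i} → Bool) {j : ι} (hj : j ≠ i) :
    cfgAt i b η j = η ⟨j, hj⟩ := by
  simp [cfgAt, Equiv.funSplitAt_symm_apply, hj]

lemma cfgAt_le (i : ι) (η : {j // j ≠ i} → Bool) :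
    cfgAt i false η ≤ cfgAt i true η := by
  intro j
  by_cases hj : j = i
  · subst hj; rw [cfgAt_apply_self, cfgAt_apply_self]; exact Bool.false_le _
  · rw [cfgAt_apply_ne i _ _ hj, cfgAt_apply_ne i _ _ hj]

lemma GV_update_eq (r : ι → ℝ) (i : ι) (c : ℝ) :
    GV (Function.update r i c) S =
      ∑ η : {j // j ≠ i} → Bool,
        (chi S (cfgAt i true η) * c + chi S (cfgAt i false η) * (1 - c)) *
          ∏ j : {j // j ≠ i}, bw (r j) (η j) := by
  classical
  have hsum : GV (Function.update r i c) S =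
      ∑ x : Bool × ({j // j ≠ i} → Bool),
        S.indicator (bernV (Function.update r i c)) ((Equiv.funSplitAt i Bool).symm x) := by
    rw [GV, ← Equiv.sum_comp (Equiv.funSplitAt i Bool).symm]
  rw [hsum, Fintype.sum_prod_type, Fintype.sum_bool, ← Finset.sum_add_distrib]
  refine Finset.sum_congr rfl fun η _ => ?_
  have hbern : ∀ b : Bool, bernV (Function.update r i c) (cfgAt i b η) =
      bw c b * ∏ j : {j // j ≠ i}, bw (r j) (η j) := by
    intro b
    rw [bernV, ← Finset.mul_prod_erase Finset.univ _ (Finset.mem_univ i)]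
    congr 1
    · rw [cfgAt_apply_self, Function.update_self]
    · rw [Finset.prod_subtype (p := fun x => x ≠ i) (Finset.univ.erase i)
        (fun x => by simp [Finset.mem_erase]) (fun j => bw (Function.update r i c j) (cfgAt i b η j))]
      refine Finset.prod_congr rfl fun j _ => ?_
      rw [cfgAt_apply_ne i _ _ j.prop, Function.update_of_ne j.prop]
  show S.indicator (bernV (Function.update r i c)) (cfgAt i true η) +
      S.indicator (bernV (Function.update r i c)) (cfgAt i false η) = _
  rw [indicator_eq_chi, indicator_eq_chi, hbern true, hbern false]
  simp only [bw_true, bw_false]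
  ring

lemma GV_update_le {r : ι → ℝ} (hr : ∀ e, 0 ≤ r e ∧ r e ≤ 1)
    (hS : ∀ ⦃σ σ' : ι → Bool⦄, σ ≤ σ' → σ ∈ S → σ' ∈ S)
    (i : ι) {s t : ℝ} (hst : s ≤ t) :
    GV (Function.update r i s) S ≤ GV (Function.update r i t) S := by
  rw [GV_update_eq, GV_update_eq]
  refine Finset.sum_le_sum fun η _ => ?_
  have hP : 0 ≤ ∏ j : {j // j ≠ i}, bw (r j) (η j) :=
    Finset.prod_nonneg fun j _ => bw_nonneg (hr j).1 (hr j).2 _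
  refine mul_le_mul_of_nonneg_right ?_ hP
  have hχ : chi S (cfgAt i false η) ≤ chi S (cfgAt i true η) :=
    chi_mono hS (cfgAt_le i η)
  nlinarith [hχ, sub_nonneg.2 hst]

/-- Harris / monotone-coupling inequality for increasing events. -/
lemma PrB_mono_p {p q : ℝ} (hp : 0 ≤ p) (hpq : p ≤ q) (hq : q ≤ 1)
    (hS : ∀ ⦃σ σ' : ι → Bool⦄, σ ≤ σ' → σ ∈ S → σ' ∈ S) :
    PrB p S ≤ PrB q S := by
  classical
  have key : ∀ u : Finset ι,
      GV (fun _ => p) S ≤ GV (fun e => if e ∈ u then q else p) S := by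
    intro u
    induction u using Finset.induction_on with
    | empty => simp
    | @insert i u hi ih =>
      refine le_trans ih ?_
      set r₀ : ι → ℝ := fun e => if e ∈ u then q else p with hr₀
      have hr : ∀ e, 0 ≤ r₀ e ∧ r₀ e ≤ 1 := by
        intro e; rw [hr₀]; constructor <;> [skip; skip] <;>
          · dsimp only; split_ifs <;> linarith
      have h2 : r₀ = Function.update r₀ i p := by
        funext j
        by_cases hj : j = i
        · subst hj; rw [Function.update_self, hr₀]; simp [hi]
        · rw [Function.update_of_ne hj]
      have h1 : (fun e => if e ∈ insert i u then q else p) = Function.update r₀ i q := by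
        funext j
        by_cases hj : j = i
        · subst hj; rw [Function.update_self]; simp
        · rw [Function.update_of_ne hj, hr₀]
          simp [Finset.mem_insert, hj]
      rw [h1]
      calc GV r₀ S = GV (Function.update r₀ i p) S := by rw [← h2]
        _ ≤ GV (Function.update r₀ i q) S := GV_update_le S hr hS i hpq
  have h := key Finset.univ
  rw [PrB, PrB]
  simpa using h

end Harris


section Factor

attribute [local instance 2000] Subtype.fintype

variable (p : ℝ) (T : Finset ι)

private noncomputable abbrev splitE (T : Finset ι) :=
  Equiv.piEquivPiSubtypeProd (fun e : ι => e ∈ T) (fun _ => Bool)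

lemma sum_split (S : Set (ι → Bool)) :
    PrB p S = ∑ f : {x // x ∈ T} → Bool, ∑ g : {x // ¬ x ∈ T} → Bool,
      chi S ((splitE T).symm (f, g)) *
        ((∏ x : {x // x ∈ T}, bw p (f x)) * ∏ x : {x // ¬ x ∈ T}, bw p (g x)) := by
  classical
  rw [PrB, GV, ← Equiv.sum_comp (splitE T).symm, Fintype.sum_prod_type]
  refine Finset.sum_congr rfl fun f _ => Finset.sum_congr rfl fun g _ => ?_
  rw [indicator_eq_chi]
  congr 1
  rw [bernV, ← Fintype.prod_subtype_mul_prod_subtype (fun e : ι => e ∈ T)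
    (fun e => bw ((fun _ => p) e) ((splitE T).symm (f, g) e))]
  congr 1
  · exact Finset.prod_congr rfl fun x _ => by
      simp [splitE, Equiv.piEquivPiSubtypeProd_symm_apply, x.prop]
  · exact Finset.prod_congr rfl fun x _ => by
      simp [splitE, Equiv.piEquivPiSubtypeProd_symm_apply, x.prop]

lemma PrB_factor (v : ι → Bool) (B : Set (ι → Bool))
    (hB : ∀ ω ω' : ι → Bool, (∀ e, e ∉ T → ω e = ω' e) → (ω ∈ B ↔ ω' ∈ B)) :
    PrB p ({ω : ι → Bool | ∀ e ∈ T, ω e = v e} ∩ B) = (∏ e ∈ T, bw p (v e)) * PrB p B := by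
  classical
  set vT : {x // x ∈ T} → Bool := fun x => v x with hvT
  have hoff : ∀ (f : {x // x ∈ T} → Bool) (g : {x // ¬ x ∈ T} → Bool) (e : ι) (he : e ∉ T),
      (splitE T).symm (f, g) e = (splitE T).symm (vT, g) e := by
    intro f g e he
    simp [splitE, Equiv.piEquivPiSubtypeProd_symm_apply, he]
  have hchiB : ∀ (f : {x // x ∈ T} → Bool) (g : {x // ¬ x ∈ T} → Bool),
      chi B ((splitE T).symm (f, g)) = chi B ((splitE T).symm (vT, g)) := by
    intro f g
    have := hB ((splitE T).symm (f, g)) ((splitE T).symm (vT, g)) (hoff f g)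
    by_cases h : (splitE T).symm (f, g) ∈ B
    · rw [chi_of_mem h, chi_of_mem (this.1 h)]
    · rw [chi_of_not_mem h, chi_of_not_mem (fun hmem => h (this.2 hmem))]
  have hchiA : ∀ (f : {x // x ∈ T} → Bool) (g : {x // ¬ x ∈ T} → Bool),
      chi ({ω : ι → Bool | ∀ e ∈ T, ω e = v e} ∩ B) ((splitE T).symm (f, g)) =
        (if f = vT then (1:ℝ) else 0) * chi B ((splitE T).symm (vT, g)) := by
    intro f g
    by_cases hf : f = vT
    · have hfg : (splitE T).symm (f, g) = (splitE T).symm (vT, g) := by rw [hf]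
      have hA : (splitE T).symm (f, g) ∈ {ω : ι → Bool | ∀ e ∈ T, ω e = v e} := by
        intro e he
        rw [hf]
        simp [splitE, Equiv.piEquivPiSubtypeProd_symm_apply, he, hvT]
      rw [if_pos hf, one_mul, ← hfg]
      by_cases h : (splitE T).symm (f, g) ∈ B
      · rw [chi_of_mem (Set.mem_inter hA h), chi_of_mem h]
      · rw [chi_of_not_mem (fun hm => h hm.2), chi_of_not_mem h]
    · have hA : (splitE T).symm (f, g) ∉ {ω : ι → Bool | ∀ e ∈ T, ω e = v e} := by
        intro hmem
        apply hf
        funext x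
        have := hmem x.1 x.2
        rwa [show (splitE T).symm (f, g) x.1 = f x by
          simp [splitE, Equiv.piEquivPiSubtypeProd_symm_apply, x.prop]] at this
      rw [chi_of_not_mem (fun hm => hA hm.1), if_neg hf, zero_mul]
  have hW : (∏ e ∈ T, bw p (v e)) = ∏ x : {x // x ∈ T}, bw p (vT x) :=
    Finset.prod_subtype T (fun x => Iff.rfl) _
  rw [sum_split, sum_split]
  have hL : ∀ f : {x // x ∈ T} → Bool,
      (∑ g : {x // ¬ x ∈ T} → Bool,
        chi ({ω : ι → Bool | ∀ e ∈ T, ω e = v e} ∩ B) ((splitE T).symm (f, g)) *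
          ((∏ x : {x // x ∈ T}, bw p (f x)) * ∏ x : {x // ¬ x ∈ T}, bw p (g x))) =
      if f = vT then (∏ x : {x // x ∈ T}, bw p (vT x)) *
        ∑ g : {x // ¬ x ∈ T} → Bool,
          chi B ((splitE T).symm (vT, g)) * ∏ x : {x // ¬ x ∈ T}, bw p (g x)
      else 0 := by
    intro f
    by_cases hf : f = vT
    · rw [if_pos hf, Finset.mul_sum]
      refine Finset.sum_congr rfl fun g _ => ?_
      rw [hchiA, if_pos hf, one_mul, hf]
      ring
    · rw [if_neg hf]
      refine Finset.sum_eq_zero fun g _ => ?_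
      rw [hchiA, if_neg hf, zero_mul, zero_mul]
  rw [Finset.sum_congr rfl fun f _ => hL f, Finset.sum_ite_eq' Finset.univ vT _,
    if_pos (Finset.mem_univ _)]
  have hR : ∀ f : {x // x ∈ T} → Bool,
      (∑ g : {x // ¬ x ∈ T} → Bool,
        chi B ((splitE T).symm (f, g)) *
          ((∏ x : {x // x ∈ T}, bw p (f x)) * ∏ x : {x // ¬ x ∈ T}, bw p (g x))) =
      (∏ x : {x // x ∈ T}, bw p (f x)) *
        ∑ g : {x // ¬ x ∈ T} → Bool,
          chi B ((splitE T).symm (vT, g)) * ∏ x : {x // ¬ x ∈ T}, bw p (g x) := by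
    intro f
    rw [Finset.mul_sum]
    refine Finset.sum_congr rfl fun g _ => ?_
    rw [hchiB]
    ring
  rw [Finset.sum_congr rfl fun f _ => hR f, ← Finset.sum_mul]
  have hone : (∑ f : {x // x ∈ T} → Bool, ∏ x : {x // x ∈ T}, bw p (f x)) = 1 := by
    have := sum_bernV (ι := {x // x ∈ T}) (fun _ => p)
    simpa [bernV] using this
  rw [hone, one_mul, hW]

end Factor

end MuTail

section BoxLemmas

open MuTail

variable {d : ℕ}

lemma mem_box_iff {n : ℕ} {x : Fin d → ℤ} :
    x ∈ box d n ↔ ∀ i, -(n : ℤ) / 2 ≤ x i ∧ x i ≤ ((n : ℤ) - 1) / 2 := by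
  simp [box, Fintype.mem_piFinset, Finset.mem_Icc]

lemma box_subset_box {m n : ℕ} (h : m ≤ n) : box d m ⊆ box d n := by
  intro x hx
  rw [mem_box_iff] at hx ⊢
  intro i
  have h1 := (hx i).1
  have h2 := (hx i).2
  have e1 : -(n : ℤ) / 2 ≤ -(m : ℤ) / 2 :=
    Int.ediv_le_ediv (by norm_num) (by exact_mod_cast neg_le_neg (Int.ofNat_le.2 h))
  have e2 : ((m : ℤ) - 1) / 2 ≤ ((n : ℤ) - 1) / 2 :=
    Int.ediv_le_ediv (by norm_num) (by omega)
  exact ⟨le_trans e1 h1, le_trans h2 e2⟩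

lemma zero_mem_box {n : ℕ} (h : 1 ≤ n) : (fun _ => 0 : Fin d → ℤ) ∈ box d n := by
  rw [mem_box_iff]
  intro i
  constructor
  · have : -(n : ℤ) ≤ 0 := by omega
    calc -(n : ℤ) / 2 ≤ 0 / 2 := Int.ediv_le_ediv (by norm_num) this
      _ = 0 := by norm_num
  · exact Int.ediv_nonneg (by omega) (by norm_num)

lemma card_box (n : ℕ) :
    (box d n).card = ((Finset.Icc (-(n : ℤ) / 2) (((n : ℤ) - 1) / 2)).card) ^ d := by
  rw [box, Fintype.card_piFinset]
  simp

lemma side_card_bounds {n : ℕ} (h : 1 ≤ n) :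
    n ≤ (Finset.Icc (-(n : ℤ) / 2) (((n : ℤ) - 1) / 2)).card ∧
      (Finset.Icc (-(n : ℤ) / 2) (((n : ℤ) - 1) / 2)).card ≤ n + 1 := by
  rw [Int.card_Icc]
  have q1 : -(n : ℤ) = 2 * (-(n:ℤ) / 2) + (-(n:ℤ)) % 2 := (Int.mul_ediv_add_emod _ 2).symm
  have q2 : ((n : ℤ) - 1) = 2 * (((n:ℤ) - 1) / 2) + ((n:ℤ) - 1) % 2 := (Int.mul_ediv_add_emod _ 2).symm
  have r1 : 0 ≤ (-(n:ℤ)) % 2 := Int.emod_nonneg _ (by norm_num)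
  have r2 : (-(n:ℤ)) % 2 < 2 := Int.emod_lt_of_pos _ (by norm_num)
  have r3 : 0 ≤ ((n:ℤ) - 1) % 2 := Int.emod_nonneg _ (by norm_num)
  have r4 : ((n:ℤ) - 1) % 2 < 2 := Int.emod_lt_of_pos _ (by norm_num)
  constructor <;> [skip; skip] <;> omega

lemma box_card_bounds {n : ℕ} (h : 1 ≤ n) :
    n ^ d ≤ (box d n).card ∧ (box d n).card ≤ (n + 1) ^ d := by
  rw [card_box]
  obtain ⟨h1, h2⟩ := side_card_bounds h
  exact ⟨Nat.pow_le_pow_left h1 d, Nat.pow_le_pow_left h2 d⟩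

lemma boxEdges_endpoint {n : ℕ} {e : Sym2 (Fin d → ℤ)} (he : e ∈ boxEdges d n)
    {y : Fin d → ℤ} (hy : y ∈ e) : y ∈ box d n := by
  rw [boxEdges, Finset.mem_image] at he
  obtain ⟨p, hp, rfl⟩ := he
  rw [Finset.mem_filter, Finset.mem_product] at hp
  rcases Sym2.mem_iff.1 hy with rfl | rfl
  · exact hp.1.1
  · exact hp.1.2

lemma boxEdges_elim {n : ℕ} {e : Sym2 (Fin d → ℤ)} (he : e ∈ boxEdges d n) :
    ∃ p : (Fin d → ℤ) × (Fin d → ℤ), p.1 ∈ box d n ∧ p.2 ∈ box d n ∧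
      (∑ i, |p.1 i - p.2 i|) = 1 ∧ (s(p.1, p.2) : Sym2 (Fin d → ℤ)) = e := by
  rw [boxEdges, Finset.mem_image] at he
  obtain ⟨p, hp, hpe⟩ := he
  rw [Finset.mem_filter, Finset.mem_product] at hp
  exact ⟨p, hp.1.1, hp.1.2, hp.2, hpe⟩

lemma sum_abs_eq_one {x y : Fin d → ℤ} (h : ∑ i, |x i - y i| = 1) :
    ∃ i : Fin d, (∀ j, j ≠ i → x j = y j) ∧ |x i - y i| = 1 := by
  classical
  have hne : ∃ i, x i ≠ y i := by
    by_contra hc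
    push_neg at hc
    have : ∑ i, |x i - y i| = 0 := Finset.sum_eq_zero fun i _ => by rw [hc i]; simp
    omega
  obtain ⟨i, hi⟩ := hne
  have hsplit : |x i - y i| + ∑ j ∈ Finset.univ.erase i, |x j - y j| = 1 := by
    rw [Finset.add_sum_erase Finset.univ (fun j => |x j - y j|) (Finset.mem_univ i)]; exact h
  have h1 : 1 ≤ |x i - y i| := by
    rcases abs_pos.2 (sub_ne_zero.2 hi) with hpos
    omega
  have hrest : ∑ j ∈ Finset.univ.erase i, |x j - y j| = 0 := by
    have : 0 ≤ ∑ j ∈ Finset.univ.erase i, |x j - y j| :=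
      Finset.sum_nonneg fun j _ => abs_nonneg _
    omega
  refine ⟨i, fun j hj => ?_, by omega⟩
  have := (Finset.sum_eq_zero_iff_of_nonneg fun j _ => abs_nonneg (x j - y j)).1 hrest j
    (Finset.mem_erase.2 ⟨hj, Finset.mem_univ j⟩)
  have := abs_eq_zero.1 this
  omega

lemma mem_boxEdges_iff {n : ℕ} {x y : Fin d → ℤ} :
    s(x, y) ∈ boxEdges d n ↔ x ∈ box d n ∧ y ∈ box d n ∧ ∑ i, |x i - y i| = 1 := by
  constructor
  · intro he
    refine ⟨boxEdges_endpoint he (by simp), boxEdges_endpoint he (by simp), ?_⟩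
    rw [boxEdges, Finset.mem_image] at he
    obtain ⟨p, hp, hpe⟩ := he
    rw [Finset.mem_filter] at hp
    have hpe' : (s(p.1, p.2) : Sym2 (Fin d → ℤ)) = s(x, y) := hpe
    rw [Sym2.eq_iff] at hpe'
    rcases hpe' with ⟨h1, h2⟩ | ⟨h1, h2⟩
    · rw [← h1, ← h2]; exact hp.2
    · rw [← h1, ← h2]
      rw [show ∑ i, |p.2 i - p.1 i| = ∑ i, |p.1 i - p.2 i| from
        Finset.sum_congr rfl fun i _ => abs_sub_comm _ _]
      exact hp.2
  · intro ⟨hx, hy, hs⟩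
    rw [boxEdges, Finset.mem_image]
    exact ⟨(x, y), by
      rw [Finset.mem_filter, Finset.mem_product]
      exact ⟨⟨hx, hy⟩, hs⟩, rfl⟩

end BoxLemmas


section GraphLemmas

open MuTail

variable {d n : ℕ}

lemma openBoxGraph_adj {ω : Cfg d n} {x y : Fin d → ℤ} :
    (openBoxGraph d n ω).Adj x y ↔
      (∃ h : s(x, y) ∈ boxEdges d n, ω ⟨s(x, y), h⟩ = true) ∧ x ≠ y := by
  rw [openBoxGraph, SimpleGraph.fromEdgeSet_adj]
  rfl

lemma adj_endpoint_box {ω : Cfg d n} {x y : Fin d → ℤ}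
    (h : (openBoxGraph d n ω).Adj x y) : y ∈ box d n := by
  obtain ⟨⟨he, -⟩, -⟩ := openBoxGraph_adj.1 h
  exact boxEdges_endpoint he (by simp)

lemma walk_closed {ω : Cfg d n} {S : Set (Fin d → ℤ)}
    (hcl : ∀ x y, x ∈ S → (openBoxGraph d n ω).Adj x y → y ∈ S)
    {u y : Fin d → ℤ} (w : (openBoxGraph d n ω).Walk u y) (hu : u ∈ S) : y ∈ S := by
  induction w with
  | nil => exact hu
  | cons h p ih => exact ih (hcl _ _ hu h)

lemma cluster_subset_of_closed {ω : Cfg d n} {S : Set (Fin d → ℤ)}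
    (hcl : ∀ x y, x ∈ S → (openBoxGraph d n ω).Adj x y → y ∈ S)
    {x : Fin d → ℤ} (hx : x ∈ S) : boxCluster d n ω x ⊆ S := by
  intro y hy
  obtain ⟨w⟩ := hy
  exact walk_closed hcl w hx

lemma cluster_subset_insert_box (ω : Cfg d n) (x : Fin d → ℤ) :
    boxCluster d n ω x ⊆ insert x ↑(box d n) := by
  refine cluster_subset_of_closed ?_ (Set.mem_insert x _)
  intro u y _ hadj
  exact Set.mem_insert_of_mem _ (adj_endpoint_box hadj)

lemma cluster_finite (ω : Cfg d n) (x : Fin d → ℤ) : (boxCluster d n ω x).Finite :=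
  Set.Finite.subset (Set.Finite.insert x (box d n).finite_toSet)
    (cluster_subset_insert_box ω x)

lemma self_mem_cluster (ω : Cfg d n) (x : Fin d → ℤ) : x ∈ boxCluster d n ω x :=
  SimpleGraph.Reachable.refl x

lemma graph_mono {ω ω' : Cfg d n} (h : ω ≤ ω') :
    openBoxGraph d n ω ≤ openBoxGraph d n ω' := by
  rw [openBoxGraph, openBoxGraph]
  refine SimpleGraph.fromEdgeSet_mono ?_
  rintro e ⟨he, hω⟩
  refine ⟨he, ?_⟩
  have := h ⟨e, he⟩
  rw [hω] at this
  exact le_antisymm (Bool.le_true _) this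

lemma cluster_mono {ω ω' : Cfg d n} (h : ω ≤ ω') (x : Fin d → ℤ) :
    boxCluster d n ω x ⊆ boxCluster d n ω' x := fun _ hy =>
  SimpleGraph.Reachable.mono (graph_mono h) hy

lemma cmaxB_mono {ω ω' : Cfg d n} (h : ω ≤ ω') : cmaxB d n ω ≤ cmaxB d n ω' := by
  rw [cmaxB, cmaxB]
  refine Finset.sup_mono_fun fun x _ => ?_
  exact Set.ncard_le_ncard (cluster_mono h x) (cluster_finite ω' x)

lemma cmaxB_le (ω : Cfg d n) : cmaxB d n ω ≤ (box d n).card + 1 := by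
  rw [cmaxB]
  refine Finset.sup_le fun x _ => ?_
  calc (boxCluster d n ω x).ncard ≤ (insert x ↑(box d n) : Set (Fin d → ℤ)).ncard :=
        Set.ncard_le_ncard (cluster_subset_insert_box ω x)
          (Set.Finite.insert x (box d n).finite_toSet)
    _ ≤ (↑(box d n) : Set (Fin d → ℤ)).ncard + 1 := Set.ncard_insert_le _ _
    _ = (box d n).card + 1 := by rw [Set.ncard_coe_finset]

lemma ncard_cluster_le_cmaxB (ω : Cfg d n) {x : Fin d → ℤ} (hx : x ∈ box d n) :
    (boxCluster d n ω x).ncard ≤ cmaxB d n ω := by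
  rw [cmaxB]
  exact Finset.le_sup (f := fun x => (boxCluster d n ω x).ncard) hx

lemma reachable_transfer {ω ω' : Cfg d n} {S : Set (Fin d → ℤ)}
    (hcl : ∀ x y, x ∈ S → (openBoxGraph d n ω).Adj x y → y ∈ S)
    (hedge : ∀ (e : Sym2 (Fin d → ℤ)) (he : e ∈ boxEdges d n),
      (∀ z ∈ e, z ∈ S) → ω ⟨e, he⟩ = true → ω' ⟨e, he⟩ = true)
    {x y : Fin d → ℤ} (hx : x ∈ S) (hr : (openBoxGraph d n ω).Reachable x y) :
    (openBoxGraph d n ω').Reachable x y := by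
  obtain ⟨w⟩ := hr
  induction w with
  | nil => exact SimpleGraph.Reachable.refl _
  | @cons u v z h p ih =>
    have hv : v ∈ S := hcl _ _ hx h
    obtain ⟨⟨he, hopen⟩, hne⟩ := openBoxGraph_adj.1 h
    have hz : ∀ t ∈ (s(u, v) : Sym2 (Fin d → ℤ)), t ∈ S := by
      intro t ht
      rcases Sym2.mem_iff.1 ht with rfl | rfl
      · exact hx
      · exact hv
    have hadj' : (openBoxGraph d n ω').Adj u v :=
      openBoxGraph_adj.2 ⟨⟨he, hedge _ he hz hopen⟩, hne⟩
    exact hadj'.reachable.trans (ih hv)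

lemma reachable_in_subbox {ℓ : ℕ} (hℓ : 1 ≤ ℓ) (hln : ℓ ≤ n) (ω : Cfg d n)
    (hopen : ∀ (e : Sym2 (Fin d → ℤ)) (he : e ∈ boxEdges d n),
      (∀ z ∈ e, z ∈ box d ℓ) → ω ⟨e, he⟩ = true)
    {x y : Fin d → ℤ} (hx : x ∈ box d ℓ) (hy : y ∈ box d ℓ) :
    (openBoxGraph d n ω).Reachable x y := by
  classical
  generalize hk : (∑ i, (x i - y i).natAbs) = k
  induction k using Nat.strong_induction_on generalizing x with
  | _ k ih =>
  by_cases hxy : x = y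
  · subst hxy; exact SimpleGraph.Reachable.refl _
  · obtain ⟨i, hi⟩ := Function.ne_iff.1 hxy
    set sg : ℤ := if x i < y i then 1 else -1 with hsg
    set x' : Fin d → ℤ := Function.update x i (x i + sg) with hx'
    have hxb := (mem_box_iff.1 hx) i
    have hyb := (mem_box_iff.1 hy) i
    have hx'mem : x' ∈ box d ℓ := by
      rw [mem_box_iff]
      intro j
      by_cases hj : j = i
      · subst hj
        rw [hx', Function.update_self, hsg]
        split_ifs with hlt <;> omega
      · rw [hx', Function.update_of_ne hj]
        exact mem_box_iff.1 hx j
    have hne : x ≠ x' := by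
      intro hEq
      have := congrFun hEq i
      rw [hx', Function.update_self] at this
      rw [hsg] at this
      split_ifs at this <;> omega
    have hsum1 : (∑ j, |x j - x' j|) = 1 := by
      rw [Finset.sum_eq_single i]
      · rw [hx', Function.update_self, hsg]
        split_ifs <;> simp
      · intro j _ hj
        rw [hx', Function.update_of_ne hj]
        simp
      · intro hmem; exact absurd (Finset.mem_univ i) hmem
    have he : (s(x, x') : Sym2 (Fin d → ℤ)) ∈ boxEdges d n :=
      mem_boxEdges_iff.2 ⟨box_subset_box hln hx, box_subset_box hln hx'mem, hsum1⟩
    have hz : ∀ t ∈ (s(x, x') : Sym2 (Fin d → ℤ)), t ∈ box d ℓ := by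
      intro t ht
      rcases Sym2.mem_iff.1 ht with rfl | rfl
      · exact hx
      · exact hx'mem
    have hadj : (openBoxGraph d n ω).Adj x x' :=
      openBoxGraph_adj.2 ⟨⟨he, hopen _ he hz⟩, hne⟩
    have hklt : (∑ j, (x' j - y j).natAbs) < k := by
      have hsplit1 : (∑ j, (x' j - y j).natAbs) =
          (x' i - y i).natAbs + ∑ j ∈ Finset.univ.erase i, (x' j - y j).natAbs :=
        (Finset.add_sum_erase Finset.univ (fun j => (x' j - y j).natAbs)
          (Finset.mem_univ i)).symm
      have hsplit2 : (∑ j, (x j - y j).natAbs) =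
          (x i - y i).natAbs + ∑ j ∈ Finset.univ.erase i, (x j - y j).natAbs :=
        (Finset.add_sum_erase Finset.univ (fun j => (x j - y j).natAbs)
          (Finset.mem_univ i)).symm
      have hrest : ∑ j ∈ Finset.univ.erase i, (x' j - y j).natAbs =
          ∑ j ∈ Finset.univ.erase i, (x j - y j).natAbs := by
        refine Finset.sum_congr rfl fun j hj => ?_
        rw [hx', Function.update_of_ne (Finset.mem_erase.1 hj).1]
      have hxi : x' i = x i + sg := by rw [hx', Function.update_self]
      rw [← hk, hsplit1, hsplit2, hrest, hxi, hsg]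
      split_ifs <;> omega
    exact hadj.reachable.trans (ih _ hklt hx'mem rfl)

end GraphLemmas

section ACfg

open MuTail

variable {d n ℓ : ℕ}

/-- an edge lies entirely inside the sub-box -/
def intraB (d ℓ : ℕ) (e : Sym2 (Fin d → ℤ)) : Prop := ∀ z ∈ e, z ∈ box d ℓ

/-- an edge touches the sub-box -/
def touchB (d ℓ : ℕ) (e : Sym2 (Fin d → ℤ)) : Prop := ∃ z ∈ e, z ∈ box d ℓ

open Classical in
/-- close all edges touching the sub-box -/
noncomputable def barcfg (d n ℓ : ℕ) (ω : Cfg d n) : Cfg d n :=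
  fun e => if touchB d ℓ e.1 then false else ω e

lemma barcfg_le (ω : Cfg d n) : barcfg d n ℓ ω ≤ ω := by
  intro e
  rw [barcfg]
  split_ifs
  · exact Bool.false_le _
  · exact le_refl _

lemma barcfg_mono {ω ω' : Cfg d n} (h : ω ≤ ω') : barcfg d n ℓ ω ≤ barcfg d n ℓ ω' := by
  intro e
  rw [barcfg, barcfg]
  split_ifs
  · exact le_refl _
  · exact h e

lemma cluster_eq_subbox (hℓ : 1 ≤ ℓ) (hln : ℓ ≤ n) {ω : Cfg d n}
    (hA : ∀ e : {e // e ∈ boxEdges d n}, touchB d ℓ e.1 → (ω e = true ↔ intraB d ℓ e.1))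
    {x : Fin d → ℤ} (hx : x ∈ box d ℓ) : boxCluster d n ω x = ↑(box d ℓ) := by
  apply Set.Subset.antisymm
  · refine cluster_subset_of_closed ?_ hx
    intro u y hu hadj
    obtain ⟨⟨he, hopen⟩, hne⟩ := openBoxGraph_adj.1 hadj
    have htouch : touchB d ℓ (s(u, y)) := ⟨u, by simp, hu⟩
    have hintra := (hA ⟨s(u, y), he⟩ htouch).1 hopen
    exact hintra y (by simp)
  · intro y hy
    refine reachable_in_subbox hℓ hln ω ?_ hx hy
    intro e he hintra
    have hz : ∃ z ∈ e, z ∈ box d ℓ := by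
      refine ⟨e.out.1, Sym2.out_fst_mem e, hintra _ (Sym2.out_fst_mem e)⟩
    exact (hA ⟨e, he⟩ hz).2 hintra

lemma cluster_out (hln : ℓ ≤ n) {ω : Cfg d n}
    (hA : ∀ e : {e // e ∈ boxEdges d n}, touchB d ℓ e.1 → (ω e = true ↔ intraB d ℓ e.1))
    {x : Fin d → ℤ} (hx : x ∉ box d ℓ) :
    boxCluster d n ω x = boxCluster d n (barcfg d n ℓ ω) x := by
  classical
  have hcl : ∀ u y : Fin d → ℤ, u ∈ {z : Fin d → ℤ | z ∉ box d ℓ} →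
      (openBoxGraph d n ω).Adj u y → y ∈ {z : Fin d → ℤ | z ∉ box d ℓ} := by
    intro u y hu hadj hyR
    obtain ⟨⟨he, hopen⟩, hne⟩ := openBoxGraph_adj.1 hadj
    have htouch : touchB d ℓ (s(u, y)) := ⟨y, by simp, hyR⟩
    have hintra := (hA ⟨s(u, y), he⟩ htouch).1 hopen
    exact hu (hintra u (by simp))
  apply Set.Subset.antisymm
  · intro y hy
    refine reachable_transfer hcl ?_ hx hy
    intro e he hall hopen
    rw [barcfg]
    dsimp only
    rw [if_neg]
    · exact hopen
    · rintro ⟨z, hz, hzR⟩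
      exact hall z hz hzR
  · exact cluster_mono (barcfg_le ω) x

lemma cmax_struct (hℓ : 1 ≤ ℓ) (hln : ℓ ≤ n) {ω : Cfg d n}
    (hA : ∀ e : {e // e ∈ boxEdges d n}, touchB d ℓ e.1 → (ω e = true ↔ intraB d ℓ e.1))
    (hout : cmaxB d n (barcfg d n ℓ ω) ≤ (box d ℓ).card) :
    cmaxB d n ω = (box d ℓ).card := by
  classical
  apply le_antisymm
  · rw [cmaxB]
    refine Finset.sup_le fun x hxn => ?_
    by_cases hx : x ∈ box d ℓ
    · rw [cluster_eq_subbox hℓ hln hA hx, Set.ncard_coe_finset]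
    · rw [cluster_out hln hA hx]
      exact le_trans (ncard_cluster_le_cmaxB _ hxn) hout
  · have h0 : (fun _ => 0 : Fin d → ℤ) ∈ box d ℓ := zero_mem_box hℓ
    have h0n : (fun _ => 0 : Fin d → ℤ) ∈ box d n := box_subset_box hln h0
    calc (box d ℓ).card = (boxCluster d n ω (fun _ => 0)).ncard := by
          rw [cluster_eq_subbox hℓ hln hA h0, Set.ncard_coe_finset]
      _ ≤ cmaxB d n ω := ncard_cluster_le_cmaxB _ h0n

open Classical in
lemma touch_card_le (d n ℓ : ℕ) :
    ((Finset.univ : Finset {e // e ∈ boxEdges d n}).filter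
        fun e => touchB d ℓ e.1).card ≤ 2 * d * (box d ℓ).card := by
  classical
  set T := (Finset.univ : Finset {e // e ∈ boxEdges d n}).filter fun e => touchB d ℓ e.1
  have hval : T.card = (T.image Subtype.val).card :=
    (Finset.card_image_of_injective T Subtype.val_injective).symm
  set g : (Fin d → ℤ) × (Fin d) × Bool → Sym2 (Fin d → ℤ) := fun q =>
    s(q.1, Function.update q.1 q.2.1 (q.1 q.2.1 + if q.2.2 then 1 else -1)) with hg
  have hsub : T.image Subtype.val ⊆
      (((box d ℓ) ×ˢ ((Finset.univ : Finset (Fin d)) ×ˢ (Finset.univ : Finset Bool))).image g) := by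
    intro e' he'
    rw [Finset.mem_image] at he'
    obtain ⟨e, heT, rfl⟩ := he'
    rw [Finset.mem_filter] at heT
    obtain ⟨-, z, hz, hzR⟩ := heT
    obtain ⟨p, hp1, hp2, hps, hpe'⟩ := boxEdges_elim e.2
    obtain ⟨i, hoff, habs⟩ := sum_abs_eq_one hps
    have hupd12 : p.2 = Function.update p.1 i (p.2 i) := by
      funext j
      by_cases hj : j = i
      · subst hj; rw [Function.update_self]
      · rw [Function.update_of_ne hj, hoff j hj]
    have hupd21 : p.1 = Function.update p.2 i (p.1 i) := by
      funext j
      by_cases hj : j = i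
      · subst hj; rw [Function.update_self]
      · rw [Function.update_of_ne hj, ← hoff j hj]
    have habs' : p.2 i = p.1 i + 1 ∨ p.2 i = p.1 i + -1 := by
      rcases abs_eq (by norm_num : (0:ℤ) ≤ 1) |>.1 habs with h | h <;> omega
    rw [Finset.mem_image]
    have hze : z ∈ (s(p.1, p.2) : Sym2 (Fin d → ℤ)) := by rw [hpe']; exact hz
    rcases Sym2.mem_iff.1 hze with rfl | rfl
    · -- z = p.1 ∈ box d ℓ
      rcases habs' with hcase | hcase
      · refine ⟨(p.1, i, true), ?_, ?_⟩
        · rw [Finset.mem_product]; exact ⟨hzR, by simp⟩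
        · have hP2 : p.2 = Function.update p.1 i (p.1 i + 1) := by
            funext j
            by_cases hj : j = i
            · subst hj; rw [Function.update_self]; omega
            · rw [Function.update_of_ne hj]; exact (hoff j hj).symm
          rw [hg]; dsimp only; rw [if_pos rfl, ← hP2, hpe']
      · refine ⟨(p.1, i, false), ?_, ?_⟩
        · rw [Finset.mem_product]; exact ⟨hzR, by simp⟩
        · have hP2 : p.2 = Function.update p.1 i (p.1 i + -1) := by
            funext j
            by_cases hj : j = i
            · subst hj; rw [Function.update_self]; omega
            · rw [Function.update_of_ne hj]; exact (hoff j hj).symm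
          rw [hg]; dsimp only
          rw [if_neg (by simp), ← hP2, hpe']
    · -- z = p.2 ∈ box d ℓ
      rcases habs' with hcase | hcase
      · refine ⟨(p.2, i, false), ?_, ?_⟩
        · rw [Finset.mem_product]; exact ⟨hzR, by simp⟩
        · have hP1 : p.1 = Function.update p.2 i (p.2 i + -1) := by
            funext j
            by_cases hj : j = i
            · subst hj; rw [Function.update_self]; omega
            · rw [Function.update_of_ne hj]; exact hoff j hj
          rw [hg]; dsimp only
          rw [if_neg (by simp), ← hP1, Sym2.eq_swap, hpe']
      · refine ⟨(p.2, i, true), ?_, ?_⟩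
        · rw [Finset.mem_product]; exact ⟨hzR, by simp⟩
        · have hP1 : p.1 = Function.update p.2 i (p.2 i + 1) := by
            funext j
            by_cases hj : j = i
            · subst hj; rw [Function.update_self]; omega
            · rw [Function.update_of_ne hj]; exact hoff j hj
          rw [hg]; dsimp only
          rw [if_pos rfl, ← hP1, Sym2.eq_swap, hpe']
  calc T.card = (T.image Subtype.val).card := hval
    _ ≤ (((box d ℓ) ×ˢ ((Finset.univ : Finset (Fin d)) ×ˢ (Finset.univ : Finset Bool))).image g).card :=
        Finset.card_le_card hsub
    _ ≤ ((box d ℓ) ×ˢ ((Finset.univ : Finset (Fin d)) ×ˢ (Finset.univ : Finset Bool))).card :=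
        Finset.card_image_le
    _ = (box d ℓ).card * (d * 2) := by
        rw [Finset.card_product, Finset.card_product]
        simp [Finset.card_univ]
    _ = 2 * d * (box d ℓ).card := by ring

end ACfg

section Decomp

open MuTail

variable {d n : ℕ}

lemma Pcfg_eq_bernV (q : ℝ) : Pcfg d n q = bernV (fun _ => q) := rfl

lemma PrEvent_eq_PrB (q : ℝ) (S : Set (Cfg d n)) : PrEvent d n q S = PrB q S := rfl

lemma numerator_decomp (d n : ℕ) (a : ℝ) (S : Set (Cfg d n)) :
    (∑ ω : Cfg d n, S.indicator (fun ω' => Pcfg d n (pn d n a ω') ω') ω)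
      = ∑ b ∈ Finset.range ((box d n).card + 2),
          PrB (Real.exp (-(b : ℝ) / (n : ℝ) ^ a)) (S ∩ {ω | cmaxB d n ω = b}) := by
  classical
  rw [← Finset.sum_fiberwise_of_maps_to (g := cmaxB d n)
    (t := Finset.range ((box d n).card + 2))
    (fun ω _ => Finset.mem_range.2 (by have := cmaxB_le ω; omega))
    (fun ω => S.indicator (fun ω' => Pcfg d n (pn d n a ω') ω') ω)]
  refine Finset.sum_congr rfl fun b hb => ?_
  rw [Finset.sum_filter, PrB, GV]
  refine Finset.sum_congr rfl fun ω _ => ?_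
  by_cases hc : cmaxB d n ω = b
  · rw [if_pos hc]
    by_cases hS : ω ∈ S
    · rw [Set.indicator_of_mem hS, Set.indicator_of_mem (Set.mem_inter hS hc)]
      show Pcfg d n (pn d n a ω) ω = bernV (fun _ => Real.exp (-(b : ℝ) / (n : ℝ) ^ a)) ω
      rw [pn, hc, Pcfg_eq_bernV]
    · rw [Set.indicator_of_notMem hS, Set.indicator_of_notMem (fun h => hS h.1)]
  · rw [if_neg hc, Set.indicator_of_notMem (fun h => hc h.2)]

end Decomp

section Analytic

open Filter

lemma tendsto_log_div_rpow {c : ℝ} (hc : 0 < c) :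
    Tendsto (fun n : ℕ => Real.log n / (n : ℝ) ^ c) atTop (nhds 0) :=
  ((isLittleO_log_rpow_atTop hc).tendsto_div_nhds_zero).comp
    tendsto_natCast_atTop_atTop

lemma tendsto_rpow_nat_atTop {c : ℝ} (hc : 0 < c) :
    Tendsto (fun n : ℕ => (n : ℝ) ^ c) atTop atTop :=
  (tendsto_rpow_atTop hc).comp tendsto_natCast_atTop_atTop

end Analytic


section MainLemmas

open MuTail

/-- numerator of the `μ_n` event probability -/
noncomputable def Nmu (d n : ℕ) (a pe : ℝ) : ℝ :=
  ∑ ω : Cfg d n, ({ω : Cfg d n | pn d n a ω ≤ pe}).indicator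
    (fun ω' => Pcfg d n (pn d n a ω') ω') ω

noncomputable def pzero (d : ℕ) (pe : ℝ) : ℝ := Real.exp (-(4^d * (-Real.log pe)))

noncomputable def czero (d : ℕ) (pe : ℝ) : ℝ := min (pzero d pe) (1 - pe)

noncomputable def Kone (d : ℕ) (pe : ℝ) : ℝ :=
  2*d*4^d*(-Real.log pe)*(-Real.log (czero d pe))

variable {d n : ℕ} {a pe L' : ℝ}

lemma phi_mem (b : ℕ) (n : ℕ) (a : ℝ) :
    0 ≤ Real.exp (-(b:ℝ)/(n:ℝ)^a) ∧ Real.exp (-(b:ℝ)/(n:ℝ)^a) ≤ 1 := by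
  refine ⟨(Real.exp_pos _).le, Real.exp_le_one_iff.2 ?_⟩
  rw [neg_div]
  simp only [Left.neg_nonpos_iff]
  exact div_nonneg (Nat.cast_nonneg b) (Real.rpow_nonneg (Nat.cast_nonneg n) a)

lemma pn_mem (ω : Cfg d n) : 0 ≤ pn d n a ω ∧ pn d n a ω ≤ 1 := by
  rw [pn]
  refine ⟨(Real.exp_pos _).le, Real.exp_le_one_iff.2 ?_⟩
  rw [neg_div]
  simp only [Left.neg_nonpos_iff]
  exact div_nonneg (Nat.cast_nonneg _) (Real.rpow_nonneg (Nat.cast_nonneg n) a)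

lemma Pcfg_pn_nonneg (ω : Cfg d n) : 0 ≤ Pcfg d n (pn d n a ω) ω := by
  rw [Pcfg_eq_bernV]
  exact bernV_nonneg (fun _ => pn_mem ω) ω

lemma event_iff (ha0 : 0 < a) (hpe0 : 0 < pe) (hn1 : 1 ≤ n) (ω : Cfg d n) :
    pn d n a ω ≤ pe ↔ (-Real.log pe) * (n:ℝ)^a ≤ (cmaxB d n ω : ℝ) := by
  have hna : (0:ℝ) < (n:ℝ)^a :=
    Real.rpow_pos_of_pos (by exact_mod_cast (by omega : 0 < n)) a
  constructor
  · intro h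
    rw [pn] at h
    have h1 := Real.log_le_log (Real.exp_pos _) h
    rw [Real.log_exp, neg_div] at h1
    have h2 : -Real.log pe ≤ ((cmaxB d n ω : ℝ))/(n:ℝ)^a := by linarith
    rw [le_div_iff₀ hna] at h2
    linarith
  · intro h
    have h2 : -Real.log pe ≤ ((cmaxB d n ω : ℝ))/(n:ℝ)^a := by
      rw [le_div_iff₀ hna]; linarith
    calc pn d n a ω = Real.exp (-(((cmaxB d n ω : ℝ))/(n:ℝ)^a)) := by rw [pn, neg_div]
      _ ≤ Real.exp (Real.log pe) := Real.exp_le_exp.2 (by linarith)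
      _ = pe := Real.exp_log hpe0

lemma event_eq (ha0 : 0 < a) (hpe0 : 0 < pe) (hn1 : 1 ≤ n) :
    {ω : Cfg d n | pn d n a ω ≤ pe}
      = {ω : Cfg d n | (-Real.log pe) * (n:ℝ)^a ≤ (cmaxB d n ω : ℝ)} := by
  ext ω
  simp only [Set.mem_setOf_eq]
  exact event_iff ha0 hpe0 hn1 ω

lemma Ev_incr :
    ∀ ⦃σ σ' : Cfg d n⦄, σ ≤ σ' →
      σ ∈ {ω : Cfg d n | (-Real.log pe) * (n:ℝ)^a ≤ (cmaxB d n ω : ℝ)} →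
      σ' ∈ {ω : Cfg d n | (-Real.log pe) * (n:ℝ)^a ≤ (cmaxB d n ω : ℝ)} := by
  intro σ σ' hle hσ
  simp only [Set.mem_setOf_eq] at hσ ⊢
  refine le_trans hσ ?_
  exact_mod_cast cmaxB_mono hle

lemma Nmu_upper (ha0 : 0 < a) (hpe0 : 0 < pe) (hpe1 : pe < 1) (hn1 : 1 ≤ n)
    (hsubn : PrEvent d n pe {ω | (-Real.log pe) * (n:ℝ)^a ≤ (cmaxB d n ω : ℝ)}
      ≤ Real.exp (-L' * (n:ℝ)^a)) :
    Nmu d n a pe ≤ (((box d n).card : ℝ) + 2) * Real.exp (-L' * (n:ℝ)^a) := by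
  classical
  have hna : (0:ℝ) < (n:ℝ)^a :=
    Real.rpow_pos_of_pos (by exact_mod_cast (by omega : 0 < n)) a
  rw [Nmu, numerator_decomp]
  have hterm : ∀ b ∈ Finset.range ((box d n).card + 2),
      PrB (Real.exp (-(b:ℝ)/(n:ℝ)^a))
        ({ω : Cfg d n | pn d n a ω ≤ pe} ∩ {ω | cmaxB d n ω = b})
          ≤ Real.exp (-L' * (n:ℝ)^a) := by
    intro b _
    have hq := phi_mem b n a
    by_cases hbt : (-Real.log pe) * (n:ℝ)^a ≤ (b:ℝ)
    · have hqle : Real.exp (-(b:ℝ)/(n:ℝ)^a) ≤ pe := by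
        rw [← Real.exp_log hpe0]
        apply Real.exp_le_exp.2
        have h2 : -Real.log pe ≤ (b:ℝ)/(n:ℝ)^a := by
          rw [le_div_iff₀ hna]; linarith
        rw [neg_div]; linarith
      calc PrB (Real.exp (-(b:ℝ)/(n:ℝ)^a))
            ({ω : Cfg d n | pn d n a ω ≤ pe} ∩ {ω | cmaxB d n ω = b})
          ≤ PrB (Real.exp (-(b:ℝ)/(n:ℝ)^a))
              {ω : Cfg d n | (-Real.log pe) * (n:ℝ)^a ≤ (cmaxB d n ω : ℝ)} := by
            refine GV_mono_set (fun e => hq) ?_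
            intro ω hω
            exact (event_iff ha0 hpe0 hn1 ω).1 hω.1
        _ ≤ PrB pe {ω : Cfg d n | (-Real.log pe) * (n:ℝ)^a ≤ (cmaxB d n ω : ℝ)} :=
            PrB_mono_p _ hq.1 hqle (le_of_lt hpe1) Ev_incr
        _ ≤ Real.exp (-L' * (n:ℝ)^a) := hsubn
    · have hempty : ({ω : Cfg d n | pn d n a ω ≤ pe} ∩ {ω | cmaxB d n ω = b})
          = (∅ : Set (Cfg d n)) := by
        ext ω
        simp only [Set.mem_inter_iff, Set.mem_setOf_eq, Set.mem_empty_iff_false,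
          iff_false, not_and]
        intro h1 h2
        apply hbt
        rw [← h2]
        exact (event_iff ha0 hpe0 hn1 ω).1 h1
      rw [hempty, PrB_empty]
      exact (Real.exp_pos _).le
  calc (∑ b ∈ Finset.range ((box d n).card + 2),
        PrB (Real.exp (-(b:ℝ)/(n:ℝ)^a))
          ({ω : Cfg d n | pn d n a ω ≤ pe} ∩ {ω | cmaxB d n ω = b}))
      ≤ ∑ _b ∈ Finset.range ((box d n).card + 2), Real.exp (-L' * (n:ℝ)^a) :=
        Finset.sum_le_sum hterm
    _ = (((box d n).card + 2 : ℕ):ℝ) * Real.exp (-L' * (n:ℝ)^a) := by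
        rw [Finset.sum_const, Finset.card_range, nsmul_eq_mul]
    _ = (((box d n).card:ℝ) + 2) * Real.exp (-L' * (n:ℝ)^a) := by push_cast; ring

lemma Zn_upper (d n : ℕ) (a : ℝ) : Zn d n a ≤ ((box d n).card : ℝ) + 2 := by
  classical
  have hZdec : Zn d n a = ∑ ω : Cfg d n,
      (Set.univ : Set (Cfg d n)).indicator (fun ω' => Pcfg d n (pn d n a ω') ω') ω := by
    rw [Zn]
    exact Finset.sum_congr rfl fun ω _ => by rw [Set.indicator_univ]
  rw [hZdec, numerator_decomp]
  calc (∑ b ∈ Finset.range ((box d n).card + 2),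
        PrB (Real.exp (-(b:ℝ)/(n:ℝ)^a))
          ((Set.univ : Set (Cfg d n)) ∩ {ω | cmaxB d n ω = b}))
      ≤ ∑ _b ∈ Finset.range ((box d n).card + 2), (1:ℝ) :=
        Finset.sum_le_sum fun b _ => GV_le_one (fun _ => phi_mem b n a) _
    _ = (((box d n).card + 2 : ℕ):ℝ) := by
        rw [Finset.sum_const, Finset.card_range, nsmul_eq_mul, mul_one]
    _ = ((box d n).card:ℝ) + 2 := by push_cast; ring

lemma Nmu_le_Zn (d n : ℕ) (a pe : ℝ) : Nmu d n a pe ≤ Zn d n a := by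
  rw [Nmu, Zn]
  exact Finset.sum_le_sum fun ω _ =>
    Set.indicator_le_self' (fun ω' _ => Pcfg_pn_nonneg ω') ω

lemma czero_pos (hd2 : 2 ≤ d) (hpe0 : 0 < pe) (hpe1 : pe < 1) : 0 < czero d pe :=
  lt_min (Real.exp_pos _) (by linarith)

lemma czero_lt_one (hd2 : 2 ≤ d) (hpe0 : 0 < pe) (hpe1 : pe < 1) : czero d pe < 1 :=
  lt_of_le_of_lt (min_le_right _ _) (by linarith)

lemma Kone_nonneg (hd2 : 2 ≤ d) (hpe0 : 0 < pe) (hpe1 : pe < 1) : 0 ≤ Kone d pe := by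
  have h1 : 0 < -Real.log pe := by
    have := Real.log_neg hpe0 hpe1
    linarith
  have h2 : 0 < -Real.log (czero d pe) := by
    have := Real.log_neg (czero_pos hd2 hpe0 hpe1) (czero_lt_one hd2 hpe0 hpe1)
    linarith
  rw [Kone]
  positivity

lemma Nmu_lower (ℓ : ℕ) (hd2 : 2 ≤ d) (ha0 : 0 < a)
    (hpe0 : 0 < pe) (hpe1 : pe < 1) (hL' : 0 < L')
    (hℓ1 : 1 ≤ ℓ) (hln : ℓ ≤ n) (hn1 : 1 ≤ n)
    (hbh_low : (-Real.log pe) * (n:ℝ)^a ≤ ((box d ℓ).card : ℝ))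
    (hbh_up : ((box d ℓ).card : ℝ) ≤ 4^d * ((-Real.log pe) * (n:ℝ)^a))
    (hsubn : PrEvent d n pe {ω | (-Real.log pe) * (n:ℝ)^a ≤ (cmaxB d n ω : ℝ)}
      ≤ Real.exp (-L' * (n:ℝ)^a))
    (hhalf : Real.exp (-L' * (n:ℝ)^a) ≤ 1/2) :
    Real.exp (-(Kone d pe * (n:ℝ)^a) - 1) ≤ Nmu d n a pe := by
  classical
  have hna : (0:ℝ) < (n:ℝ)^a :=
    Real.rpow_pos_of_pos (by exact_mod_cast (by omega : 0 < n)) a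
  have hlogpe : 0 < -Real.log pe := by
    have := Real.log_neg hpe0 hpe1
    linarith
  have hc₀0 : 0 < czero d pe := czero_pos hd2 hpe0 hpe1
  have hlogc₀ : 0 < -Real.log (czero d pe) := by
    have := Real.log_neg hc₀0 (czero_lt_one hd2 hpe0 hpe1)
    linarith
  set bh := (box d ℓ).card with hbhdef
  set phat := Real.exp (-(bh:ℝ) / (n:ℝ)^a) with hphat
  have hphat_pos : 0 < phat := Real.exp_pos _
  have hphat_le : phat ≤ pe := by
    rw [hphat]
    calc Real.exp (-(bh:ℝ) / (n:ℝ)^a) ≤ Real.exp (Real.log pe) := by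
          apply Real.exp_le_exp.2
          have h2 : -Real.log pe ≤ (bh:ℝ)/(n:ℝ)^a := by
            rw [le_div_iff₀ hna]; linarith
          rw [neg_div]; linarith
      _ = pe := Real.exp_log hpe0
  have hphat_ge : pzero d pe ≤ phat := by
    rw [pzero, hphat]
    apply Real.exp_le_exp.2
    rw [neg_div, neg_le_neg_iff, div_le_iff₀ hna]
    calc (bh:ℝ) ≤ 4^d * ((-Real.log pe) * (n:ℝ)^a) := hbh_up
      _ = (4^d * -Real.log pe) * (n:ℝ)^a := by ring
  set Tf : Finset {e // e ∈ boxEdges d n} :=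
    Finset.univ.filter (fun e => touchB d ℓ e.1) with hTf
  set vv : {e // e ∈ boxEdges d n} → Bool :=
    fun e => if intraB d ℓ e.1 then true else false with hvv
  have hvval : ∀ e : {e // e ∈ boxEdges d n},
      vv e = if intraB d ℓ e.1 then true else false := fun e => rfl
  set Acfg : Set (Cfg d n) := {ω | ∀ e ∈ Tf, ω e = vv e} with hAcfg
  set Bev : Set (Cfg d n) :=
    {ω | ¬ ((-Real.log pe) * (n:ℝ)^a ≤ (cmaxB d n (barcfg d n ℓ ω) : ℝ))} with hBev
  have hAiff : ∀ ω ∈ Acfg, ∀ e : {e // e ∈ boxEdges d n},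
      touchB d ℓ e.1 → (ω e = true ↔ intraB d ℓ e.1) := by
    intro ω hω e htouch
    have heT : e ∈ Tf := by
      rw [hTf]; exact Finset.mem_filter.2 ⟨Finset.mem_univ e, htouch⟩
    have hval := (hω e heT).trans (hvval e)
    by_cases hintra : intraB d ℓ e.1
    · rw [hval, if_pos hintra]; simp [hintra]
    · rw [hval, if_neg hintra]; simp [hintra]
  have hABcmax : ∀ ω ∈ Acfg ∩ Bev, cmaxB d n ω = bh := by
    rintro ω ⟨hωA, hωB⟩
    refine cmax_struct hℓ1 hln (hAiff ω hωA) ?_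
    rw [hBev] at hωB
    simp only [Set.mem_setOf_eq, not_le] at hωB
    have h2 : (cmaxB d n (barcfg d n ℓ ω) : ℝ) < (bh:ℝ) := lt_of_lt_of_le hωB hbh_low
    have h3 : cmaxB d n (barcfg d n ℓ ω) < bh := by exact_mod_cast h2
    rw [hbhdef] at h3
    exact le_of_lt h3
  have hpnAB : ∀ ω ∈ Acfg ∩ Bev, pn d n a ω = phat := by
    intro ω hω
    rw [pn, hABcmax ω hω, hphat]
  have hsubAB : Acfg ∩ Bev ⊆ {ω : Cfg d n | pn d n a ω ≤ pe} := by
    intro ω hω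
    have h1 : pn d n a ω = phat := hpnAB ω hω
    simp only [Set.mem_setOf_eq, h1]
    exact hphat_le
  have hNlow1 : PrB phat (Acfg ∩ Bev) ≤ Nmu d n a pe := by
    rw [Nmu, PrB, GV]
    refine Finset.sum_le_sum fun ω _ => ?_
    by_cases hω : ω ∈ Acfg ∩ Bev
    · rw [Set.indicator_of_mem hω, Set.indicator_of_mem (hsubAB hω)]
      rw [hpnAB ω hω, Pcfg_eq_bernV]
    · rw [Set.indicator_of_notMem hω]
      exact Set.indicator_nonneg (fun ω' _ => Pcfg_pn_nonneg ω') ω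
  have hBoff : ∀ ω ω' : Cfg d n, (∀ e, e ∉ Tf → ω e = ω' e) → (ω ∈ Bev ↔ ω' ∈ Bev) := by
    intro ω ω' hoff
    have hbar : barcfg d n ℓ ω = barcfg d n ℓ ω' := by
      funext e
      rw [barcfg, barcfg]
      split_ifs with htouch
      · rfl
      · refine hoff e ?_
        rw [hTf]
        simp only [Finset.mem_filter, Finset.mem_univ, true_and]
        exact htouch
    rw [hBev]
    simp only [Set.mem_setOf_eq, hbar]
  have hfac : PrB phat (Acfg ∩ Bev) = (∏ e ∈ Tf, bw phat (vv e)) * PrB phat Bev := by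
    rw [hAcfg]
    exact PrB_factor phat Tf vv Bev hBoff
  have hDineq : PrB phat Bevᶜ ≤ Real.exp (-L' * (n:ℝ)^a) := by
    have hcompl : Bevᶜ = {ω : Cfg d n |
        (-Real.log pe) * (n:ℝ)^a ≤ (cmaxB d n (barcfg d n ℓ ω) : ℝ)} := by
      rw [hBev]
      ext ω
      simp only [Set.mem_compl_iff, Set.mem_setOf_eq, not_not]
    have hincr : ∀ ⦃σ σ' : Cfg d n⦄, σ ≤ σ' → σ ∈ Bevᶜ → σ' ∈ Bevᶜ := by
      intro σ σ' hle hσ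
      rw [hcompl] at hσ ⊢
      simp only [Set.mem_setOf_eq] at hσ ⊢
      refine le_trans hσ ?_
      exact_mod_cast cmaxB_mono (barcfg_mono hle)
    have hsubEv : Bevᶜ ⊆ {ω : Cfg d n | (-Real.log pe) * (n:ℝ)^a ≤ (cmaxB d n ω : ℝ)} := by
      intro ω hω
      rw [hcompl] at hω
      simp only [Set.mem_setOf_eq] at hω ⊢
      refine le_trans hω ?_
      exact_mod_cast cmaxB_mono (barcfg_le ω)
    calc PrB phat Bevᶜ ≤ PrB pe Bevᶜ :=
          PrB_mono_p _ hphat_pos.le hphat_le (le_of_lt hpe1) hincr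
      _ ≤ PrB pe {ω : Cfg d n | (-Real.log pe) * (n:ℝ)^a ≤ (cmaxB d n ω : ℝ)} :=
          GV_mono_set (fun _ => ⟨by linarith, by linarith⟩) hsubEv
      _ ≤ Real.exp (-L' * (n:ℝ)^a) := hsubn
  have hBev_ge : 1/2 ≤ PrB phat Bev := by
    have h2 := GV_compl (ι := {e // e ∈ boxEdges d n}) (fun _ => phat) Bevᶜ
    rw [compl_compl] at h2
    have h1 : PrB phat Bev = 1 - PrB phat Bevᶜ := h2
    rw [h1]
    linarith [hDineq, hhalf]
  have hprod_nonneg : 0 ≤ ∏ e ∈ Tf, bw phat (vv e) :=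
    Finset.prod_nonneg fun e _ => bw_nonneg hphat_pos.le (by linarith) _
  have hWlow : Real.exp (-(Kone d pe * (n:ℝ)^a)) ≤ ∏ e ∈ Tf, bw phat (vv e) := by
    have hfac_ge : ∀ e ∈ Tf, czero d pe ≤ bw phat (vv e) := by
      intro e _
      rw [hvval e]
      by_cases hintra : intraB d ℓ e.1
      · rw [if_pos hintra, bw_true]
        exact le_trans (min_le_left _ _) hphat_ge
      · rw [if_neg hintra, bw_false]
        calc czero d pe ≤ 1 - pe := min_le_right _ _
          _ ≤ 1 - phat := by linarith
    have hpow : czero d pe ^ Tf.card ≤ ∏ e ∈ Tf, bw phat (vv e) := by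
      have h9 := Finset.prod_le_prod (s := Tf) (f := fun _ => czero d pe)
        (g := fun e => bw phat (vv e)) (fun i _ => hc₀0.le) hfac_ge
      rwa [Finset.prod_const] at h9
    refine le_trans ?_ hpow
    rw [← Real.exp_log (pow_pos hc₀0 Tf.card), Real.log_pow]
    apply Real.exp_le_exp.2
    have hcardT : (Tf.card : ℝ) ≤ 2 * d * (bh:ℝ) := by
      have h3 := touch_card_le d n ℓ
      rw [← hTf, ← hbhdef] at h3
      calc (Tf.card:ℝ) ≤ ((2*d*bh : ℕ):ℝ) := by exact_mod_cast h3
        _ = 2*d*(bh:ℝ) := by push_cast; ring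
    have h5 : (Tf.card : ℝ) * (-Real.log (czero d pe))
        ≤ (2*d*(bh:ℝ)) * (-Real.log (czero d pe)) :=
      mul_le_mul_of_nonneg_right hcardT hlogc₀.le
    have h6 : (2*(d:ℝ)*(bh:ℝ)) * (-Real.log (czero d pe)) ≤
        2*(d:ℝ)*(4^d * ((-Real.log pe) * (n:ℝ)^a)) * (-Real.log (czero d pe)) := by
      refine mul_le_mul_of_nonneg_right ?_ hlogc₀.le
      refine mul_le_mul_of_nonneg_left hbh_up (by positivity)
    have hK : 2*(d:ℝ)*(4^d * ((-Real.log pe) * (n:ℝ)^a)) * (-Real.log (czero d pe))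
        = Kone d pe * (n:ℝ)^a := by rw [Kone]; ring
    have h7 : (Tf.card : ℝ) * (-Real.log (czero d pe)) ≤ Kone d pe * (n:ℝ)^a := by
      rw [← hK]; exact le_trans h5 h6
    nlinarith [h7]
  have hhalf_exp : Real.exp (-(1:ℝ)) ≤ 1/2 := by
    rw [Real.exp_neg]
    have h2e : (2:ℝ) ≤ Real.exp 1 := by
      have := Real.add_one_le_exp (1:ℝ)
      linarith
    rw [inv_eq_one_div]
    exact one_div_le_one_div_of_le (by norm_num) h2e
  calc Real.exp (-(Kone d pe * (n:ℝ)^a) - 1)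
      = Real.exp (-(Kone d pe * (n:ℝ)^a)) * Real.exp (-(1:ℝ)) := by
        rw [← Real.exp_add]; ring_nf
    _ ≤ (∏ e ∈ Tf, bw phat (vv e)) * (1/2) :=
        mul_le_mul hWlow hhalf_exp (Real.exp_pos _).le hprod_nonneg
    _ ≤ (∏ e ∈ Tf, bw phat (vv e)) * PrB phat Bev :=
        mul_le_mul_of_nonneg_left hBev_ge hprod_nonneg
    _ = PrB phat (Acfg ∩ Bev) := hfac.symm
    _ ≤ Nmu d n a pe := hNlow1

end MainLemmas
set_option maxHeartbeats 2000000 in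
/-- Given a lower bound `ln Z_n ≥ -L (ln n) n^(a(d-1)/d)` and subcritical exponential
decay `P_{p_c-ε}(|C_max| ≥ (-ln(p_c-ε)) n^a) ≤ e^(-L' n^a)`, the left tail of `p_n`
under `μ_n` satisfies `limsup (1/n^a) ln μ_n(p_n ≤ p_c - ε) < 0`. -/
theorem mu_left_tail (d : ℕ) (hd : 2 ≤ d) (a : ℝ) (ha0 : 0 < a) (had : a < d)
    (pc : ℝ) (hpc0 : 0 < pc) (hpc1 : pc < 1)
    (ε : ℝ) (hε0 : 0 < ε) (hε : ε < pc)
    (L : ℝ) (hL : 0 < L)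
    (hZ : ∀ᶠ n : ℕ in atTop,
      -L * Real.log n * (n : ℝ) ^ (a * ((d : ℝ) - 1) / d) ≤ Real.log (Zn d n a))
    (L' : ℝ) (hL' : 0 < L')
    (hsub : ∀ᶠ n : ℕ in atTop,
      PrEvent d n (pc - ε) {ω | (-Real.log (pc - ε)) * (n : ℝ) ^ a ≤ (cmaxB d n ω : ℝ)}
        ≤ Real.exp (-L' * (n : ℝ) ^ a)) :
    limsup (fun n : ℕ =>
        (1 / (n : ℝ) ^ a) * Real.log (muEvent d n a {ω | pn d n a ω ≤ pc - ε}))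
      atTop < 0 := by
  classical
  have hpe0 : 0 < pc - ε := sub_pos.2 hε
  have hpe1 : pc - ε < 1 := by linarith
  have hC : 0 < -Real.log (pc - ε) := by
    have := Real.log_neg hpe0 hpe1
    linarith
  have hdR : (0:ℝ) < (d:ℝ) := by
    have : (0:ℕ) < d := by omega
    exact_mod_cast this
  have hdne : (d:ℝ) ≠ 0 := ne_of_gt hdR
  have hadd : 0 < a / d := div_pos ha0 hdR
  have hK₁0 : 0 ≤ Kone d (pc - ε) := Kone_nonneg hd hpe0 hpe1
  set ℓf : ℕ → ℕ :=
    fun n => ⌈((-Real.log (pc - ε)) * (n:ℝ)^a) ^ (1/(d:ℝ))⌉₊ + 1 with hℓf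
  -- eventualities
  have Ea : ∀ᶠ n : ℕ in atTop, 2 ≤ n := eventually_ge_atTop 2
  have hta : Tendsto (fun n : ℕ => (n:ℝ)^a) atTop atTop := tendsto_rpow_nat_atTop ha0
  have Eb : ∀ᶠ n : ℕ in atTop, 1 ≤ (-Real.log (pc - ε)) * (n:ℝ)^a :=
    (hta.const_mul_atTop hC).eventually_ge_atTop 1
  have Ec : ∀ᶠ n : ℕ in atTop, ℓf n ≤ n := by
    have had1 : a / (d:ℝ) < 1 := (div_lt_one hdR).2 had
    have h1 : Tendsto (fun n : ℕ => (n:ℝ) ^ (a/(d:ℝ) - 1)) atTop (nhds 0) := by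
      have h2 := (tendsto_rpow_neg_atTop (by linarith : 0 < 1 - a/(d:ℝ))).comp
        tendsto_natCast_atTop_atTop
      have h3 : (fun n : ℕ => ((n:ℝ) ^ (-(1 - a/(d:ℝ))))) = fun n : ℕ => (n:ℝ) ^ (a/(d:ℝ) - 1) := by
        funext n; rw [neg_sub]
      rw [← h3]
      exact h2
    set cc : ℝ := ((-Real.log (pc - ε)) ^ (1/(d:ℝ)) + 1) with hcc
    have hcc0 : 0 < cc := by
      have : 0 ≤ (-Real.log (pc - ε)) ^ (1/(d:ℝ)) := Real.rpow_nonneg hC.le _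
      rw [hcc]; linarith
    have h4 := h1.eventually (gt_mem_nhds (show (0:ℝ) < 1/(2*cc) by positivity))
    filter_upwards [Ea, eventually_ge_atTop 4, h4] with n hn2 hn4 hsmall
    have hn0 : (0:ℝ) < (n:ℝ) := by exact_mod_cast (by omega : 0 < n)
    have hsplit : ((-Real.log (pc - ε)) * (n:ℝ)^a) ^ (1/(d:ℝ)) =
        (-Real.log (pc - ε)) ^ (1/(d:ℝ)) * (n:ℝ)^(a/(d:ℝ)) := by
      rw [Real.mul_rpow hC.le (Real.rpow_nonneg hn0.le a), ← Real.rpow_mul hn0.le]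
      rw [show a * (1/(d:ℝ)) = a/(d:ℝ) by ring]
    have hnad : (n:ℝ)^(a/(d:ℝ) - 1) * (n:ℝ) = (n:ℝ)^(a/(d:ℝ)) := by
      rw [← Real.rpow_add_one hn0.ne' (a/(d:ℝ) - 1)]
      norm_num
    have hx1 : (n:ℝ)^(a/(d:ℝ)) ≤ (n:ℝ) / (2*cc) := by
      rw [← hnad]
      calc (n:ℝ)^(a/(d:ℝ) - 1) * (n:ℝ) ≤ (1/(2*cc)) * (n:ℝ) :=
            mul_le_mul_of_nonneg_right (le_of_lt hsmall) hn0.le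
        _ = (n:ℝ) / (2*cc) := by ring
    have hx2 : ((-Real.log (pc - ε)) * (n:ℝ)^a) ^ (1/(d:ℝ)) ≤ (n:ℝ)/2 := by
      rw [hsplit]
      have hle : (-Real.log (pc - ε)) ^ (1/(d:ℝ)) ≤ cc := by rw [hcc]; linarith
      calc (-Real.log (pc - ε)) ^ (1/(d:ℝ)) * (n:ℝ)^(a/(d:ℝ))
          ≤ cc * ((n:ℝ)/(2*cc)) := by
            refine mul_le_mul hle hx1 (Real.rpow_nonneg hn0.le _) hcc0.le
        _ = (n:ℝ)/2 := by field_simp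
    have hceil : ((ℓf n : ℕ) : ℝ) ≤ ((-Real.log (pc - ε)) * (n:ℝ)^a) ^ (1/(d:ℝ)) + 2 := by
      rw [hℓf]
      push_cast
      have := Nat.ceil_lt_add_one
        (Real.rpow_nonneg (by positivity : (0:ℝ) ≤ (-Real.log (pc - ε)) * (n:ℝ)^a) (1/(d:ℝ)))
      linarith
    have hn4' : (4:ℝ) ≤ (n:ℝ) := by exact_mod_cast hn4
    have : ((ℓf n : ℕ) : ℝ) ≤ (n:ℝ) := by
      calc ((ℓf n : ℕ) : ℝ) ≤ ((-Real.log (pc - ε)) * (n:ℝ)^a) ^ (1/(d:ℝ)) + 2 := hceil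
        _ ≤ (n:ℝ)/2 + 2 := by linarith
        _ ≤ (n:ℝ) := by linarith
    exact_mod_cast this
  have Ee : ∀ᶠ n : ℕ in atTop, Real.exp (-L' * (n:ℝ)^a) ≤ 1/2 := by
    have h0 : Tendsto (fun n : ℕ => Real.exp (-(L' * (n:ℝ)^a))) atTop (nhds 0) :=
      Real.tendsto_exp_atBot.comp (tendsto_neg_atTop_atBot.comp (hta.const_mul_atTop hL'))
    filter_upwards [h0.eventually (gt_mem_nhds (by norm_num : (0:ℝ) < 1/2))] with n hn
    rw [neg_mul]
    exact le_of_lt hn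
  have Ef : ∀ᶠ n : ℕ in atTop,
      Real.log (((box d n).card : ℝ) + 2) ≤ min (L'/4) 1 * (n:ℝ)^a := by
    have hη : (0:ℝ) < min (L'/4) 1 := lt_min (by linarith) one_pos
    have hδ : (0:ℝ) < min (L'/4) 1 / (2*(d+1)) := by positivity
    have h4 := (tendsto_log_div_rpow ha0).eventually (gt_mem_nhds hδ)
    filter_upwards [Ea, h4] with n hn2 hsmall
    have hn0 : (0:ℝ) < (n:ℝ) := by exact_mod_cast (by omega : 0 < n)
    have hn1R : (1:ℝ) ≤ (n:ℝ) := by exact_mod_cast (by omega : 1 ≤ n)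
    have hn2R : (2:ℝ) ≤ (n:ℝ) := by exact_mod_cast hn2
    have hna : (0:ℝ) < (n:ℝ)^a := Real.rpow_pos_of_pos hn0 a
    have hlogn : 0 ≤ Real.log n := Real.log_nonneg hn1R
    have hcard : ((box d n).card : ℝ) ≤ ((n:ℝ)+1)^d := by
      have := (box_card_bounds (d := d) (by omega : 1 ≤ n)).2
      calc ((box d n).card : ℝ) ≤ (((n+1) ^ d : ℕ) : ℝ) := by exact_mod_cast this
        _ = ((n:ℝ)+1)^d := by push_cast; ring
    have hb1 : ((box d n).card : ℝ) + 2 ≤ (2*(n:ℝ))^(d+1) := by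
      have h1 : ((n:ℝ)+1)^d ≤ (2*(n:ℝ))^d :=
        pow_le_pow_left₀ (by linarith) (by linarith) d
      have h2 : (2:ℝ) ≤ (2*(n:ℝ))^d := by
        calc (2:ℝ) ≤ 2*(n:ℝ) := by linarith
          _ ≤ (2*(n:ℝ))^d := le_self_pow₀ (by linarith) (by omega)
      have h3 : (2*(n:ℝ))^d + (2*(n:ℝ))^d ≤ (2*(n:ℝ))^(d+1) := by
        rw [pow_succ]
        nlinarith [pow_pos (by linarith : (0:ℝ) < 2*(n:ℝ)) d]
      linarith
    have hpos : (0:ℝ) < ((box d n).card : ℝ) + 2 := by positivity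
    have hlog1 : Real.log (((box d n).card : ℝ) + 2) ≤ (d+1) * (Real.log 2 + Real.log n) := by
      calc Real.log (((box d n).card : ℝ) + 2) ≤ Real.log ((2*(n:ℝ))^(d+1)) :=
            Real.log_le_log hpos hb1
        _ = (d+1) * Real.log (2*(n:ℝ)) := by
            rw [Real.log_pow]; push_cast; ring
        _ = (d+1) * (Real.log 2 + Real.log n) := by
            rw [Real.log_mul (by norm_num) hn0.ne']
    have hlog2 : Real.log 2 ≤ Real.log n := Real.log_le_log (by norm_num) hn2R
    have hlogdiv : Real.log n ≤ (min (L'/4) 1 / (2*(d+1))) * (n:ℝ)^a := by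
      have := le_of_lt hsmall
      rw [div_le_iff₀ hna] at this
      linarith [this]
    calc Real.log (((box d n).card : ℝ) + 2) ≤ (d+1) * (Real.log 2 + Real.log n) := hlog1
      _ ≤ (d+1) * (2 * Real.log n) := by
          refine mul_le_mul_of_nonneg_left (by linarith) (by positivity)
      _ = 2*((d:ℝ)+1) * Real.log n := by ring
      _ ≤ 2*((d:ℝ)+1) * ((min (L'/4) 1 / (2*(d+1))) * (n:ℝ)^a) := by
          refine mul_le_mul_of_nonneg_left hlogdiv (by positivity)
      _ = min (L'/4) 1 * (n:ℝ)^a := by field_simp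
  have Eg : ∀ᶠ n : ℕ in atTop,
      L * Real.log n * (n : ℝ) ^ (a * ((d : ℝ) - 1) / d) ≤ (L'/4) * (n:ℝ)^a := by
    have hδ : (0:ℝ) < L'/(4*L) := by positivity
    have h4 := (tendsto_log_div_rpow hadd).eventually (gt_mem_nhds hδ)
    filter_upwards [Ea, h4] with n hn2 hsmall
    have hn0 : (0:ℝ) < (n:ℝ) := by exact_mod_cast (by omega : 0 < n)
    have hn1R : (1:ℝ) ≤ (n:ℝ) := by exact_mod_cast (by omega : 1 ≤ n)
    have hnad : (0:ℝ) < (n:ℝ)^(a/(d:ℝ)) := Real.rpow_pos_of_pos hn0 _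
    have hne1 : (0:ℝ) ≤ (n:ℝ) ^ (a * ((d : ℝ) - 1) / d) := (Real.rpow_pos_of_pos hn0 _).le
    have hlogn : 0 ≤ Real.log n := Real.log_nonneg hn1R
    have hlogdiv : Real.log n ≤ (L'/(4*L)) * (n:ℝ)^(a/(d:ℝ)) := by
      have := le_of_lt hsmall
      rw [div_le_iff₀ hnad] at this
      linarith [this]
    have hcomb : (n:ℝ)^(a/(d:ℝ)) * (n:ℝ) ^ (a * ((d : ℝ) - 1) / d) = (n:ℝ)^a := by
      rw [← Real.rpow_add hn0]
      congr 1
      field_simp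
      ring
    calc L * Real.log n * (n : ℝ) ^ (a * ((d : ℝ) - 1) / d)
        ≤ L * ((L'/(4*L)) * (n:ℝ)^(a/(d:ℝ))) * (n : ℝ) ^ (a * ((d : ℝ) - 1) / d) := by
          refine mul_le_mul_of_nonneg_right
            (mul_le_mul_of_nonneg_left hlogdiv hL.le) hne1
      _ = (L'/4) * ((n:ℝ)^(a/(d:ℝ)) * (n:ℝ) ^ (a * ((d : ℝ) - 1) / d)) := by
          field_simp
      _ = (L'/4) * (n:ℝ)^a := by rw [hcomb]
  -- main eventual bound
  have main : ∀ᶠ n : ℕ in atTop,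
      ((1 / (n : ℝ) ^ a) * Real.log (muEvent d n a {ω | pn d n a ω ≤ pc - ε}) ≤ -(L'/2)
        ∧ -(Kone d (pc - ε) + 2) ≤ (1 / (n : ℝ) ^ a) *
            Real.log (muEvent d n a {ω | pn d n a ω ≤ pc - ε})) := by
    filter_upwards [Ea, Eb, Ec, Ee, Ef, Eg, hZ, hsub] with n hn2 htn hln hhalf hcard hg hZn hsubn
    have hn1 : 1 ≤ n := by omega
    have hn0R : (0:ℝ) < (n:ℝ) := by exact_mod_cast (by omega : 0 < n)
    have hna : (0:ℝ) < (n:ℝ)^a := Real.rpow_pos_of_pos hn0R a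
    have hna1 : (1:ℝ) ≤ (n:ℝ)^a :=
      Real.one_le_rpow (by exact_mod_cast hn1) ha0.le
    set ℓ := ℓf n with hℓdef
    have hℓval : ℓ = ⌈((-Real.log (pc - ε)) * (n:ℝ)^a) ^ (1/(d:ℝ))⌉₊ + 1 := hℓdef
    have hℓ1 : 1 ≤ ℓ := by omega
    have hx0 : (0:ℝ) ≤ (-Real.log (pc - ε)) * (n:ℝ)^a := by positivity
    set x := ((-Real.log (pc - ε)) * (n:ℝ)^a) ^ (1/(d:ℝ)) with hxdef
    have hx1 : (1:ℝ) ≤ x := Real.one_le_rpow htn (by positivity)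
    have hxd : x ^ d = (-Real.log (pc - ε)) * (n:ℝ)^a := by
      rw [hxdef, ← Real.rpow_natCast (((-Real.log (pc - ε)) * (n:ℝ)^a) ^ (1/(d:ℝ))) d,
        ← Real.rpow_mul hx0]
      rw [show 1/(d:ℝ) * (d:ℕ) = 1 by field_simp]
      exact Real.rpow_one _
    have hℓlb : x ≤ (ℓ:ℝ) := by
      rw [hℓval]
      push_cast
      have := Nat.le_ceil x
      rw [hxdef] at this
      linarith
    have hℓub : ((ℓ:ℝ) + 1) ≤ 4 * x := by
      rw [hℓval]
      push_cast
      have h1 := Nat.ceil_lt_add_one (Real.rpow_nonneg hx0 (1/(d:ℝ)))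
      rw [← hxdef] at h1
      linarith
    obtain ⟨hcb1, hcb2⟩ := box_card_bounds (d := d) hℓ1
    have hbh_low : (-Real.log (pc - ε)) * (n:ℝ)^a ≤ ((box d ℓ).card:ℝ) := by
      calc (-Real.log (pc - ε)) * (n:ℝ)^a = x ^ d := hxd.symm
        _ ≤ (ℓ:ℝ)^d := pow_le_pow_left₀ (by linarith) hℓlb d
        _ = ((ℓ^d : ℕ):ℝ) := by push_cast; ring
        _ ≤ ((box d ℓ).card:ℝ) := by exact_mod_cast hcb1
    have hbh_up : ((box d ℓ).card:ℝ) ≤ 4^d * ((-Real.log (pc - ε)) * (n:ℝ)^a) := by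
      calc ((box d ℓ).card:ℝ) ≤ (((ℓ+1)^d : ℕ):ℝ) := by exact_mod_cast hcb2
        _ = ((ℓ:ℝ)+1)^d := by push_cast; ring
        _ ≤ (4*x)^d := pow_le_pow_left₀ (by positivity) hℓub d
        _ = 4^d * x^d := mul_pow 4 x d
        _ = 4^d * ((-Real.log (pc - ε)) * (n:ℝ)^a) := by rw [hxd]
    -- apply the four main estimates
    have hNup := Nmu_upper (L' := L') ha0 hpe0 hpe1 hn1 hsubn
    have hZup := Zn_upper d n a
    have hNZ := Nmu_le_Zn d n a (pc - ε)
    have hNlow := Nmu_lower ℓ hd ha0 hpe0 hpe1 hL' hℓ1 hln hn1 hbh_low hbh_up hsubn hhalf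
    have hNpos : 0 < Nmu d n a (pc - ε) := lt_of_lt_of_le (Real.exp_pos _) hNlow
    have hZpos : 0 < Zn d n a := lt_of_lt_of_le hNpos hNZ
    have hlogmu : Real.log (muEvent d n a {ω : Cfg d n | pn d n a ω ≤ pc - ε})
        = Real.log (Nmu d n a (pc - ε)) - Real.log (Zn d n a) := by
      have hmu : muEvent d n a {ω : Cfg d n | pn d n a ω ≤ pc - ε}
          = Nmu d n a (pc - ε) / Zn d n a := rfl
      rw [hmu, Real.log_div hNpos.ne' hZpos.ne']
    have hM2pos : (0:ℝ) < ((box d n).card:ℝ) + 2 := by positivity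
    have hlogN_up : Real.log (Nmu d n a (pc - ε))
        ≤ Real.log (((box d n).card:ℝ) + 2) + (-L' * (n:ℝ)^a) := by
      calc Real.log (Nmu d n a (pc - ε))
          ≤ Real.log ((((box d n).card:ℝ) + 2) * Real.exp (-L' * (n:ℝ)^a)) :=
            Real.log_le_log hNpos hNup
        _ = _ := by rw [Real.log_mul hM2pos.ne' (Real.exp_ne_zero _), Real.log_exp]
    have hlogN_low : -(Kone d (pc - ε) * (n:ℝ)^a) - 1 ≤ Real.log (Nmu d n a (pc - ε)) := by
      have h8 := Real.log_le_log (Real.exp_pos _) hNlow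
      rwa [Real.log_exp] at h8
    have hlogZ_up : Real.log (Zn d n a) ≤ Real.log (((box d n).card:ℝ) + 2) :=
      Real.log_le_log hZpos hZup
    have hcard' : Real.log (((box d n).card:ℝ) + 2) ≤ (L'/4)*(n:ℝ)^a :=
      le_trans hcard (mul_le_mul_of_nonneg_right (min_le_left _ _) hna.le)
    have hcard'' : Real.log (((box d n).card:ℝ) + 2) ≤ (n:ℝ)^a := by
      refine le_trans hcard ?_
      calc min (L'/4) 1 * (n:ℝ)^a ≤ 1 * (n:ℝ)^a :=
            mul_le_mul_of_nonneg_right (min_le_right _ _) hna.le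
        _ = (n:ℝ)^a := one_mul _
    constructor
    · rw [hlogmu]
      have hcomb : Real.log (Nmu d n a (pc - ε)) - Real.log (Zn d n a)
          ≤ -(L'/2) * (n:ℝ)^a := by
        have h9 : -Real.log (Zn d n a) ≤ L * Real.log n * (n:ℝ)^(a*((d:ℝ)-1)/d) := by
          nlinarith [hZn]
        nlinarith [hlogN_up, hcard', hg, h9]
      calc (1/(n:ℝ)^a) * (Real.log (Nmu d n a (pc - ε)) - Real.log (Zn d n a))
          ≤ (1/(n:ℝ)^a) * (-(L'/2) * (n:ℝ)^a) :=
            mul_le_mul_of_nonneg_left hcomb (by positivity)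
        _ = -(L'/2) := by field_simp
    · rw [hlogmu]
      have hcomb : -(Kone d (pc - ε)+2) * (n:ℝ)^a
          ≤ Real.log (Nmu d n a (pc - ε)) - Real.log (Zn d n a) := by
        have h10 : -(Kone d (pc - ε)+2) * (n:ℝ)^a
            = -(Kone d (pc - ε)*(n:ℝ)^a) - (n:ℝ)^a - (n:ℝ)^a := by ring
        rw [h10]
        linarith [hlogN_low, hlogZ_up, hcard'', hna1]
      calc -(Kone d (pc - ε)+2) = (1/(n:ℝ)^a) * (-(Kone d (pc - ε)+2)*(n:ℝ)^a) := by
            field_simp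
        _ ≤ (1/(n:ℝ)^a) * (Real.log (Nmu d n a (pc - ε)) - Real.log (Zn d n a)) :=
            mul_le_mul_of_nonneg_left hcomb (by positivity)
  have hub : ∀ᶠ n : ℕ in atTop,
      (1 / (n : ℝ) ^ a) * Real.log (muEvent d n a {ω | pn d n a ω ≤ pc - ε}) ≤ -(L'/2) :=
    main.mono fun n h => h.1
  have hlb : ∀ᶠ n : ℕ in atTop,
      -(Kone d (pc - ε) + 2) ≤ (1 / (n : ℝ) ^ a) *
        Real.log (muEvent d n a {ω | pn d n a ω ≤ pc - ε}) :=
    main.mono fun n h => h.2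
  have hcb := isCoboundedUnder_le_of_eventually_le atTop hlb
  calc limsup (fun n : ℕ =>
        (1 / (n : ℝ) ^ a) * Real.log (muEvent d n a {ω | pn d n a ω ≤ pc - ε})) atTop
      ≤ -(L'/2) := limsup_le_of_le hcb hub
    _ < 0 := by linarith
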